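/- The Correlation Distance CD(A,B) = (1/π)·arccos(CC(A,B)) is a metric on the set of labelings of n elements into m classes (for any m ≥ 2), where CC is the multiclass Matthews Correlation Coefficient, restricted to labelings A for which Σ_j a_j² < n² (i.e., A is not constant). In particular, for any three non-constant labelings A, B, C: CD(A,C) ≤ CD(A,B) + CD(B,C). The proof identifies CC(A,B) as the cosine of the angle between the centered one-hot-encoding matrices: with Ā = (a_{ij} − a_j/n) where a_{ij} = 1{A(i)=j}, one has ⟨Ā,B̄⟩ = Σ_j (c_jj − a_j·b_j/n), ‖Ā‖² = n − Σ_j a_j²/n, and CC(A,B) = ⟨Ā,B̄⟩/(‖Ā‖·‖B̄‖). -/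

import Mathlib

open Finset

/-- Class size: number of elements with label j. -/
def csize {n m : ℕ} (A : Fin n → Fin m) (j : Fin m) : ℕ :=
  (univ.filter fun x => A x = j).card

/-- The multiclass Matthews Correlation Coefficient of two labelings. -/
noncomputable def mcc {n m : ℕ} (A B : Fin n → Fin m) : ℝ :=
  ((n : ℝ) * ∑ i, ((univ.filter fun x => A x = i ∧ B x = i).card : ℝ) -
      ∑ i, (csize A i : ℝ) * (csize B i : ℝ)) /
    Real.sqrt (((n : ℝ) ^ 2 - ∑ i, (csize A i : ℝ) ^ 2) *
               ((n : ℝ) ^ 2 - ∑ i, (csize B i : ℝ) ^ 2))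

/-- The Correlation Distance CD = (1/π)·arccos(CC). -/
noncomputable def corrDist {n m : ℕ} (A B : Fin n → Fin m) : ℝ :=
  (1 / Real.pi) * Real.arccos (mcc A B)

section AngleTriangle

open InnerProductGeometry Real

variable {V : Type*} [NormedAddCommGroup V] [InnerProductSpace ℝ V]

local notation "⟪" x ", " y "⟫" => @inner ℝ _ _ x y

lemma my_arccos_antitone {a b : ℝ} (h : a ≤ b) : Real.arccos b ≤ Real.arccos a := by
  unfold Real.arccos
  have := Real.monotone_arcsin h
  linarith

lemma my_angle_triangle_unit (x y z : V) (hx : ‖x‖ = 1) (hy : ‖y‖ = 1) (hz : ‖z‖ = 1) :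
    angle x z ≤ angle x y + angle y z := by
  rcases le_or_gt π (angle x y + angle y z) with h | h
  · exact (angle_le_pi x z).trans h
  set c : ℝ := ⟪x, y⟫ with hc
  set d : ℝ := ⟪y, z⟫ with hd
  set e : ℝ := ⟪x, z⟫ with he
  have hcb : |c| ≤ 1 := by
    have := abs_real_inner_le_norm x y; rw [hx, hy] at this; simpa using this
  have hdb : |d| ≤ 1 := by
    have := abs_real_inner_le_norm y z; rw [hy, hz] at this; simpa using this
  have heb : |e| ≤ 1 := by
    have := abs_real_inner_le_norm x z; rw [hx, hz] at this; simpa using this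
  have hyy : ⟪y, y⟫ = (1:ℝ) := by
    rw [real_inner_self_eq_norm_sq, hy]; norm_num
  have hxx : ⟪x, x⟫ = (1:ℝ) := by
    rw [real_inner_self_eq_norm_sq, hx]; norm_num
  have hzz : ⟪z, z⟫ = (1:ℝ) := by
    rw [real_inner_self_eq_norm_sq, hz]; norm_num
  set u : V := x - c • y with hu
  set v : V := z - d • y with hv
  have hnu : ‖u‖ ^ 2 = 1 - c ^ 2 := by
    rw [← real_inner_self_eq_norm_sq, hu]
    simp only [inner_sub_left, inner_sub_right, real_inner_smul_left, real_inner_smul_right,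
      hyy, hxx]
    rw [hc, real_inner_comm y x]
    ring
  have hnv : ‖v‖ ^ 2 = 1 - d ^ 2 := by
    rw [← real_inner_self_eq_norm_sq, hv]
    simp only [inner_sub_left, inner_sub_right, real_inner_smul_left, real_inner_smul_right,
      hyy, hzz]
    rw [hd, real_inner_comm y z]
    ring
  have huv : ⟪u, v⟫ = e - c * d := by
    rw [hu, hv]
    simp only [inner_sub_left, inner_sub_right, real_inner_smul_left, real_inner_smul_right,
      hyy]
    rw [hc, hd, he, real_inner_comm y x]
    ring
  have hnusq : ‖u‖ = Real.sqrt (1 - c ^ 2) := by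
    rw [← hnu, Real.sqrt_sq (norm_nonneg _)]
  have hnvsq : ‖v‖ = Real.sqrt (1 - d ^ 2) := by
    rw [← hnv, Real.sqrt_sq (norm_nonneg _)]
  have hkey : c * d - Real.sqrt (1 - c ^ 2) * Real.sqrt (1 - d ^ 2) ≤ e := by
    have h1 : -(‖u‖ * ‖v‖) ≤ ⟪u, v⟫ :=
      (neg_le_neg (abs_real_inner_le_norm u v)).trans (neg_abs_le _)
    rw [huv, hnusq, hnvsq] at h1
    linarith
  have hα : angle x y = Real.arccos c := by
    unfold InnerProductGeometry.angle
    rw [hx, hy]; norm_num; rfl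
  have hβ : angle y z = Real.arccos d := by
    unfold InnerProductGeometry.angle
    rw [hy, hz]; norm_num; rfl
  have hγ : angle x z = Real.arccos e := by
    unfold InnerProductGeometry.angle
    rw [hx, hz]; norm_num; rfl
  have hcosab : Real.cos (angle x y + angle y z) =
      c * d - Real.sqrt (1 - c ^ 2) * Real.sqrt (1 - d ^ 2) := by
    rw [Real.cos_add, hα, hβ, Real.cos_arccos (neg_le_of_abs_le hcb) (le_of_abs_le hcb),
      Real.cos_arccos (neg_le_of_abs_le hdb) (le_of_abs_le hdb),
      Real.sin_arccos, Real.sin_arccos]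
  have hfin : Real.arccos e ≤ angle x y + angle y z := by
    have h2 : Real.cos (angle x y + angle y z) ≤ e := by rw [hcosab]; exact hkey
    calc Real.arccos e ≤ Real.arccos (Real.cos (angle x y + angle y z)) :=
          my_arccos_antitone h2
      _ = angle x y + angle y z := Real.arccos_cos
          (add_nonneg (angle_nonneg _ _) (angle_nonneg _ _)) h.le
  rw [hγ]; exact hfin

lemma my_angle_triangle (x y z : V) (hx : x ≠ 0) (hy : y ≠ 0) (hz : z ≠ 0) :
    angle x z ≤ angle x y + angle y z := by
  have h := my_angle_triangle_unit (‖x‖⁻¹ • x) (‖y‖⁻¹ • y) (‖z‖⁻¹ • z)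
    (norm_smul_inv_norm hx) (norm_smul_inv_norm hy) (norm_smul_inv_norm hz)
  have px : (0:ℝ) < ‖x‖⁻¹ := inv_pos.mpr (norm_pos_iff.mpr hx)
  have py : (0:ℝ) < ‖y‖⁻¹ := inv_pos.mpr (norm_pos_iff.mpr hy)
  have pz : (0:ℝ) < ‖z‖⁻¹ := inv_pos.mpr (norm_pos_iff.mpr hz)
  rwa [angle_smul_left_of_pos x (‖z‖⁻¹ • z) px, angle_smul_right_of_pos x z pz,
    angle_smul_left_of_pos x (‖y‖⁻¹ • y) px, angle_smul_right_of_pos x y py,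
    angle_smul_left_of_pos y (‖z‖⁻¹ • z) py, angle_smul_right_of_pos y z pz] at h

end AngleTriangle

section Encoding

/-- The centered one-hot encoding of a labeling. -/
noncomputable def enc {n m : ℕ} (A : Fin n → Fin m) : EuclideanSpace ℝ (Fin n × Fin m) :=
  WithLp.toLp 2 (fun p : Fin n × Fin m => (if A p.1 = p.2 then (1:ℝ) else 0) - (csize A p.2 : ℝ) / n)

lemma sum_csize {n m : ℕ} (A : Fin n → Fin m) : ∑ j, csize A j = n := by
  unfold csize
  rw [← Finset.card_eq_sum_card_fiberwise (fun x _ => mem_univ (A x))]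
  simp

lemma inner_enc {n m : ℕ} (hn : 0 < n) (A B : Fin n → Fin m) :
    @inner ℝ _ _ (enc A) (enc B) =
      (∑ j, ((univ.filter fun x => A x = j ∧ B x = j).card : ℝ)) -
        (∑ j, (csize A j : ℝ) * (csize B j : ℝ)) / n := by
  have hn' : (n : ℝ) ≠ 0 := Nat.cast_ne_zero.mpr hn.ne'
  rw [PiLp.inner_apply]
  simp only [RCLike.inner_apply, conj_trivial]
  rw [Fintype.sum_prod_type, Finset.sum_comm]
  rw [Finset.sum_div, ← Finset.sum_sub_distrib]
  apply Finset.sum_congr rfl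
  intro j _
  have key : ∀ i : Fin n, enc A (i, j) * enc B (i, j) =
      (if A i = j ∧ B i = j then (1:ℝ) else 0)
        - (if A i = j then (1:ℝ) else 0) * ((csize B j : ℝ)/n)
        - ((csize A j : ℝ)/n) * (if B i = j then (1:ℝ) else 0)
        + (csize A j : ℝ) * (csize B j : ℝ) / n^2 := by
    intro i
    unfold enc
    by_cases h1 : A i = j <;> by_cases h2 : B i = j <;> simp [h1, h2] <;> ring
  rw [Finset.sum_congr rfl fun i _ => (mul_comm _ _).trans (key i)]
  rw [Finset.sum_add_distrib, Finset.sum_sub_distrib, Finset.sum_sub_distrib,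
    ← Finset.sum_mul, ← Finset.mul_sum, Finset.sum_boole, Finset.sum_boole,
    Finset.sum_boole, Finset.sum_const]
  unfold csize
  simp only [card_univ, Fintype.card_fin, nsmul_eq_mul]
  field_simp
  ring

lemma norm_enc_sq {n m : ℕ} (hn : 0 < n) (A : Fin n → Fin m) :
    (n : ℝ) * ‖enc A‖ ^ 2 = (n : ℝ) ^ 2 - ∑ j, (csize A j : ℝ) ^ 2 := by
  have hn' : (n : ℝ) ≠ 0 := Nat.cast_ne_zero.mpr hn.ne'
  have h := inner_enc hn A A
  rw [real_inner_self_eq_norm_sq] at h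
  simp only [and_self] at h
  have hsum : (∑ j, (((univ.filter fun x => A x = j).card : ℕ) : ℝ)) = n := by
    rw [← Nat.cast_sum]
    norm_cast
    exact sum_csize A
  rw [hsum] at h
  have hsq : (∑ j, (csize A j : ℝ) * (csize A j : ℝ)) = ∑ j, (csize A j : ℝ) ^ 2 := by
    apply Finset.sum_congr rfl; intro j _; ring
  rw [hsq] at h
  rw [h]
  field_simp

lemma enc_ne_zero {n m : ℕ} (hn : 0 < n) (A : Fin n → Fin m)
    (hA : ∑ j, (csize A j) ^ 2 < n ^ 2) : enc A ≠ 0 := by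
  have hn' : (0:ℝ) < n := Nat.cast_pos.mpr hn
  have hAr : (∑ j, (csize A j : ℝ) ^ 2) < (n : ℝ) ^ 2 := by
    have : ((∑ j, (csize A j) ^ 2 : ℕ) : ℝ) < ((n ^ 2 : ℕ) : ℝ) := Nat.cast_lt.mpr hA
    push_cast at this
    convert this using 2
  have hpos : 0 < ‖enc A‖ ^ 2 := by
    have h := norm_enc_sq hn A
    nlinarith
  intro h0
  rw [h0] at hpos
  simp at hpos

lemma mcc_eq_cos {n m : ℕ} (hn : 0 < n) (A B : Fin n → Fin m) :
    mcc A B = @inner ℝ _ _ (enc A) (enc B) / (‖enc A‖ * ‖enc B‖) := by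
  have hn' : (n : ℝ) ≠ 0 := Nat.cast_ne_zero.mpr hn.ne'
  have hnum : (n : ℝ) * ∑ i, ((univ.filter fun x => A x = i ∧ B x = i).card : ℝ) -
      ∑ i, (csize A i : ℝ) * (csize B i : ℝ) =
      (n : ℝ) * @inner ℝ _ _ (enc A) (enc B) := by
    rw [inner_enc hn A B]
    field_simp
  have hdenom : ((n : ℝ) ^ 2 - ∑ i, (csize A i : ℝ) ^ 2) *
      ((n : ℝ) ^ 2 - ∑ i, (csize B i : ℝ) ^ 2) =
      ((n : ℝ) * (‖enc A‖ * ‖enc B‖)) ^ 2 := by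
    rw [← norm_enc_sq hn A, ← norm_enc_sq hn B]
    ring
  unfold mcc
  rw [hnum, hdenom, Real.sqrt_sq (by positivity), mul_div_mul_left _ _ hn']

end Encoding

/-- The Correlation Distance satisfies the triangle inequality on non-constant
labelings of n elements into m ≥ 2 classes (A non-constant: Σ_j a_j² < n²). -/
theorem corrDist_triangle {n m : ℕ} (hm : 2 ≤ m) (A B C : Fin n → Fin m)
    (hA : ∑ j, (csize A j) ^ 2 < n ^ 2)
    (hB : ∑ j, (csize B j) ^ 2 < n ^ 2)
    (hC : ∑ j, (csize C j) ^ 2 < n ^ 2) :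
    corrDist A C ≤ corrDist A B + corrDist B C := by
  have hn : 0 < n := by
    rcases Nat.eq_zero_or_pos n with h | h
    · subst h; simp at hA
    · exact h
  have hCD : ∀ (X Y : Fin n → Fin m),
      corrDist X Y = (1 / Real.pi) * InnerProductGeometry.angle (enc X) (enc Y) := by
    intro X Y
    unfold corrDist InnerProductGeometry.angle
    rw [mcc_eq_cos hn X Y]
  rw [hCD A C, hCD A B, hCD B C, ← mul_add]
  apply mul_le_mul_of_nonneg_left _ (by positivity)
  exact my_angle_triangle _ _ _ (enc_ne_zero hn A hA) (enc_ne_zero hn B hB)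
    (enc_ne_zero hn C hC)
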